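/- Let (W,S) be a Coxeter system, w ∈ W, and s ∈ S a right descent of w (i.e., ℓ(ws) < ℓ(w)). Then the map ρ_s : [e,w] → [e,w] defined by ρ_s(u) = us is a special matching of the Bruhat interval [e,w]. -/

import Mathlib

open CoxeterSystem

variable {B W : Type*} [Group W] {Cm : CoxeterMatrix B} (cs : CoxeterSystem Cm W)

section auxiliary

open List

local prefix:100 "s" => cs.simple
local prefix:100 "π" => cs.wordProd
local prefix:100 "ℓ" => cs.length
local prefix:100 "ris" => cs.rightInvSeq

noncomputable section
open Classical

/-- The basic involution used for the sign representation. -/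
def etaFun (i : B) : W × ℤˣ → W × ℤˣ :=
  fun p => (s i * p.1 * s i, if p.1 = s i then -p.2 else p.2)

theorem etaFun_involutive (i : B) : Function.Involutive (etaFun cs i) := by
  rintro ⟨t, ε⟩
  have hss := cs.simple_mul_simple_self i
  simp only [etaFun]
  have h1 : s i * (s i * t * s i) * s i = t := by
    rw [show s i * (s i * t * s i) * s i = (s i * s i) * t * (s i * s i) by group, hss]
    group
  have h2 : (s i * t * s i = s i) ↔ (t = s i) := by
    constructor
    · intro h
      have : s i * (s i * t * s i) * s i = s i * s i * s i := by rw [h]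
      rwa [h1, hss, one_mul] at this
    · rintro rfl; rw [hss, one_mul]
  rw [Prod.mk.injEq]
  refine ⟨h1, ?_⟩
  by_cases h : t = s i
  · simp [h, hss, one_mul, h2]
  · simp [h, h2]

/-- The permutation of `W × ℤˣ` attached to a simple reflection. -/
def eta (i : B) : Equiv.Perm (W × ℤˣ) := (etaFun_involutive cs i).toPerm

theorem eta_apply (i : B) (t : W) (ε : ℤˣ) :
    eta cs i (t, ε) = (s i * t * s i, if t = s i then -ε else ε) := rfl

/-- Product of the `eta`s along a word. -/
def etaWord (ω : List B) : Equiv.Perm (W × ℤˣ) := (ω.map (eta cs)).prod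

theorem etaWord_apply (ω : List B) (t : W) (ε : ℤˣ) :
    etaWord cs ω (t, ε) =
      (π ω * t * (π ω)⁻¹, if Odd ((ris ω).count t) then -ε else ε) := by
  induction ω generalizing ε with
  | nil => simp [etaWord]
  | cons i ω ih =>
    have : etaWord cs (i :: ω) = eta cs i * etaWord cs ω := by
      simp [etaWord, List.map_cons, List.prod_cons]
    rw [this, Equiv.Perm.mul_apply, ih, eta_apply]
    rw [cs.wordProd_cons]
    have hfst : s i * (π ω * t * (π ω)⁻¹) * s i = (s i * π ω) * t * (s i * π ω)⁻¹ := by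
      rw [mul_inv_rev, cs.inv_simple]; group
    have hcond : (π ω * t * (π ω)⁻¹ = s i) ↔ (t = (π ω)⁻¹ * s i * π ω) := by
      constructor
      · intro h; rw [← h]; group
      · intro h; rw [h]; group
    rw [Prod.mk.injEq]
    constructor
    · exact hfst
    · show (if π ω * t * (π ω)⁻¹ = s i then -(if Odd ((ris ω).count t) then -ε else ε)
          else (if Odd ((ris ω).count t) then -ε else ε)) = _
      have hris : (ris (i :: ω)) = ((π ω)⁻¹ * s i * π ω) :: ris ω := rfl
      rw [hris, List.count_cons]
      clear hris
      simp only [beq_iff_eq]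
      by_cases h : t = (π ω)⁻¹ * s i * π ω
      · subst h
        rw [if_pos (by group : π ω * ((π ω)⁻¹ * s i * π ω) * (π ω)⁻¹ = s i), if_pos rfl]
        rcases Nat.even_or_odd ((ris ω).count ((π ω)⁻¹ * s i * π ω)) with he | ho
        · rw [if_neg (Nat.not_odd_iff_even.mpr he), if_pos (Nat.odd_add_one.mpr (Nat.not_odd_iff_even.mpr he))]
        · rw [if_pos ho, if_neg (fun hh => (Nat.odd_add_one.mp hh) ho), neg_neg]
      · rw [if_neg (fun hc => h (hcond.mp hc)), if_neg (fun hc : (π ω)⁻¹ * s i * π ω = t => h hc.symm), Nat.add_zero]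

theorem drop_alternatingWord (i j : B) (d N : ℕ) :
    (alternatingWord i j N).drop d = alternatingWord i j (N - d) := by
  induction d generalizing N with
  | zero => simp
  | succ d ih =>
    cases N with
    | zero => simp [alternatingWord]
    | succ N =>
      rw [alternatingWord_succ', List.drop_succ_cons, ih]
      congr 1
      omega

theorem get?_alternatingWord (i j : B) (N k : ℕ) (h : k < N) :
    (alternatingWord i j N)[k]? = some (if Even (N - k - 1) then j else i) := by
  induction N generalizing k with
  | zero => omega
  | succ N ih =>
    rw [alternatingWord_succ']
    cases k with
    | zero =>
      have e : N + 1 - 0 - 1 = N := by omega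
      rw [e, List.getElem?_cons_zero]
    | succ k =>
      have e : N + 1 - (k + 1) - 1 = N - k - 1 := by omega
      rw [e, List.getElem?_cons_succ, ih k (by omega)]

/-- The sequence whose entries make up right inversion sequences of alternating words. -/
def dv (i j : B) (q : ℕ) : W :=
  (π (alternatingWord i j q))⁻¹ * π (alternatingWord i j (q + 1))

theorem getD_ris_alternatingWord (i j : B) (N k : ℕ) (h : k < N) :
    (ris (alternatingWord i j N)).getD k 1 = dv cs i j (N - k - 1) := by
  rw [cs.getD_rightInvSeq, drop_alternatingWord, get?_alternatingWord i j N k h]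
  have h1 : N - (k + 1) = N - k - 1 := by omega
  rw [h1, dv, alternatingWord_succ' i j (N - k - 1), cs.wordProd_cons]
  simp [mul_assoc]

theorem dv_two_mul (i j : B) (u : ℕ) :
    dv cs i j (2 * u) = ((s i * s j) ^ u)⁻¹ * s j * (s i * s j) ^ u := by
  rw [dv, cs.prod_alternatingWord_eq_mul_pow, cs.prod_alternatingWord_eq_mul_pow,
    if_pos (by rw [Nat.even_iff]; omega : Even (2 * u)),
    if_neg (by rw [Nat.even_iff]; omega : ¬ Even (2 * u + 1))]
  have h1 : 2 * u / 2 = u := by omega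
  have h2 : (2 * u + 1) / 2 = u := by omega
  rw [h1, h2, one_mul]
  simp [mul_assoc]

theorem dv_two_mul_add_one (i j : B) (u : ℕ) :
    dv cs i j (2 * u + 1) =
      ((s i * s j) ^ u)⁻¹ * s j * (s i * s j) ^ u * (s i * s j) := by
  rw [dv, cs.prod_alternatingWord_eq_mul_pow, cs.prod_alternatingWord_eq_mul_pow,
    if_neg (by rw [Nat.even_iff]; omega : ¬ Even (2 * u + 1)),
    if_pos (by rw [Nat.even_iff]; omega : Even (2 * u + 1 + 1))]
  have h1 : (2 * u + 1) / 2 = u := by omega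
  have h2 : (2 * u + 1 + 1) / 2 = u + 1 := by omega
  rw [h1, h2, one_mul, mul_inv_rev, cs.inv_simple, pow_succ]
  simp [mul_assoc]

section helper

variable {G : Type*} [Group G] {a b : G} {m : ℕ}

theorem braid_conj_pow (haa : a * a = 1) (hbb : b * b = 1) (r : ℕ) :
    b * (a * b) ^ r * b = ((a * b) ^ r)⁻¹ := by
  have hbinv : b⁻¹ = b := by rw [inv_eq_iff_mul_eq_one, hbb]
  have h1 : b * (a * b) * b⁻¹ = (a * b)⁻¹ := by
    rw [hbinv, eq_inv_iff_mul_eq_one]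
    have e : b * (a * b) * b * (a * b) = b * (a * (b * b) * a) * b := by group
    rw [e, hbb, mul_one, haa, mul_one, hbb]
  calc b * (a * b) ^ r * b = b * (a * b) ^ r * b⁻¹ := by rw [hbinv]
    _ = (b * (a * b) * b⁻¹) ^ r := (conj_pow).symm
    _ = ((a * b)⁻¹) ^ r := by rw [h1]
    _ = ((a * b) ^ r)⁻¹ := inv_pow _ _

theorem braid_pow_inv (hm : (a * b) ^ m = 1) {r : ℕ} (hr : r ≤ m) :
    ((a * b) ^ r)⁻¹ = (a * b) ^ (m - r) := by
  rw [inv_eq_iff_mul_eq_one, ← pow_add]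
  rw [show r + (m - r) = m by omega, hm]

-- core identity F : g^{-r} b g^{r+1} = b  when m = 2r+1
theorem braid_F (haa : a * a = 1) (hbb : b * b = 1) (hm : (a * b) ^ m = 1) {r : ℕ}
    (hr : m = 2 * r + 1) :
    ((a * b) ^ r)⁻¹ * b * (a * b) ^ (r + 1) = b := by
  have h1 : b * (a * b) ^ (r + 1) * b = (a * b) ^ r := by
    rw [braid_conj_pow haa hbb, braid_pow_inv hm (by omega)]
    congr 1
    omega
  have h2 : b * (a * b) ^ (r + 1) = (a * b) ^ r * b := by
    calc b * (a * b) ^ (r + 1) = b * (a * b) ^ (r + 1) * (b * b) := by rw [hbb, mul_one]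
      _ = (b * (a * b) ^ (r + 1) * b) * b := by group
      _ = (a * b) ^ r * b := by rw [h1]
  calc ((a * b) ^ r)⁻¹ * b * (a * b) ^ (r + 1)
      = ((a * b) ^ r)⁻¹ * (b * (a * b) ^ (r + 1)) := by group
    _ = ((a * b) ^ r)⁻¹ * ((a * b) ^ r * b) := by rw [h2]
    _ = b := by group

-- core identity C : b commutes with g^r when m = 2r
theorem braid_C (haa : a * a = 1) (hbb : b * b = 1) (hm : (a * b) ^ m = 1) {r : ℕ}
    (hr : m = 2 * r) :
    b * (a * b) ^ r = (a * b) ^ r * b := by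
  have h1 : b * (a * b) ^ r * b = (a * b) ^ r := by
    rw [braid_conj_pow haa hbb, braid_pow_inv hm (by omega)]
    congr 1
    omega
  calc b * (a * b) ^ r = (b * (a * b) ^ r * b) * b := by
        rw [mul_assoc (b * (a * b) ^ r) b b, hbb, mul_one]
    _ = (a * b) ^ r * b := by rw [h1]

end helper

section helper2

variable {G : Type*} [Group G] {a b : G} {m : ℕ}

theorem braid_bgb (haa : a * a = 1) (hbb : b * b = 1) : b * (a * b) * b = (a * b)⁻¹ := by
  have := braid_conj_pow haa hbb 1
  simpa using this

theorem braid_shift_even (haa : a * a = 1) (hbb : b * b = 1) (hm : (a * b) ^ m = 1)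
    {r : ℕ} (hr : m = 2 * r) (u : ℕ) :
    ((a * b) ^ (u + r))⁻¹ * b * (a * b) ^ (u + r) = ((a * b) ^ u)⁻¹ * b * (a * b) ^ u := by
  set g := a * b with hg
  have hcomm : Commute (g ^ r) b := by
    have h1 : b * g ^ r * b = g ^ r := by
      rw [braid_conj_pow haa hbb, braid_pow_inv hm (by omega)]
      congr 1
      omega
    have : b * g ^ r = g ^ r * b := by
      calc b * g ^ r = (b * g ^ r * b) * b := by
            rw [mul_assoc (b * g ^ r) b b, hbb, mul_one]
        _ = g ^ r * b := by rw [h1]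
    exact (Commute.symm this)
  have hX : Commute (g ^ r) ((g ^ u)⁻¹ * b * g ^ u) := by
    exact (((Commute.refl g).pow_pow r u).inv_right.mul_right hcomm).mul_right
      ((Commute.refl g).pow_pow r u)
  calc (g ^ (u + r))⁻¹ * b * g ^ (u + r)
      = (g ^ r)⁻¹ * (((g ^ u)⁻¹ * b * g ^ u) * g ^ r) := by
        rw [pow_add, mul_inv_rev]; group
    _ = (g ^ r)⁻¹ * (g ^ r * ((g ^ u)⁻¹ * b * g ^ u)) := by rw [← hX.eq]
    _ = (g ^ u)⁻¹ * b * g ^ u := by rw [inv_mul_cancel_left]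

theorem braid_shift_odd1 (haa : a * a = 1) (hbb : b * b = 1) (hm : (a * b) ^ m = 1)
    {r : ℕ} (hr : m = 2 * r + 1) (u : ℕ) :
    ((a * b) ^ (u + r))⁻¹ * b * (a * b) ^ (u + r) * (a * b)
      = ((a * b) ^ u)⁻¹ * b * (a * b) ^ u := by
  set g := a * b with hg
  have e2 : g ^ (u + r) * g = g ^ (r + 1) * g ^ u := by
    rw [← pow_succ, ← pow_add]
    congr 1
    omega
  calc (g ^ (u + r))⁻¹ * b * g ^ (u + r) * g
      = (g ^ u * g ^ r)⁻¹ * b * (g ^ (u + r) * g) := by rw [← pow_add]; group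
    _ = (g ^ u)⁻¹ * ((g ^ r)⁻¹ * b * g ^ (r + 1)) * g ^ u := by
        rw [e2, mul_inv_rev]; group
    _ = (g ^ u)⁻¹ * b * g ^ u := by rw [braid_F haa hbb hm hr]

theorem braid_shift_odd2 (haa : a * a = 1) (hbb : b * b = 1) (hm : (a * b) ^ m = 1)
    {r : ℕ} (hr : m = 2 * r + 1) (u : ℕ) :
    ((a * b) ^ (u + r + 1))⁻¹ * b * (a * b) ^ (u + r + 1)
      = ((a * b) ^ u)⁻¹ * b * (a * b) ^ u * (a * b) := by
  have e1 : (a * b) ^ (u + r + 1) = (a * b) ^ (u + 1) * (a * b) ^ r := by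
    rw [← pow_add]; congr 1; omega
  have e2 : (a * b) ^ (u + r + 1) = (a * b) ^ (r + 1) * (a * b) ^ u := by
    rw [← pow_add]; congr 1; omega
  have hgb : (a * b)⁻¹ * b = b * (a * b) := by
    rw [← braid_bgb haa hbb, mul_assoc (b * (a * b)) b b, hbb, mul_one]
  calc ((a * b) ^ (u + r + 1))⁻¹ * b * (a * b) ^ (u + r + 1)
      = ((a * b) ^ (u + 1) * (a * b) ^ r)⁻¹ * b * ((a * b) ^ (r + 1) * (a * b) ^ u) := by
        nth_rewrite 2 [e2]
        rw [e1]
    _ = ((a * b) ^ (u + 1))⁻¹ * (((a * b) ^ r)⁻¹ * b * (a * b) ^ (r + 1)) * (a * b) ^ u := by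
        rw [mul_inv_rev]; group
    _ = ((a * b) ^ (u + 1))⁻¹ * b * (a * b) ^ u := by rw [braid_F haa hbb hm hr]
    _ = ((a * b) ^ u)⁻¹ * ((a * b)⁻¹ * b) * (a * b) ^ u := by rw [pow_succ', mul_inv_rev]; group
    _ = ((a * b) ^ u)⁻¹ * (b * (a * b)) * (a * b) ^ u := by rw [hgb]
    _ = ((a * b) ^ u)⁻¹ * b * ((a * b) * (a * b) ^ u) := by simp only [mul_assoc]
    _ = ((a * b) ^ u)⁻¹ * b * ((a * b) ^ u * (a * b)) := by rw [← pow_succ', ← pow_succ]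
    _ = ((a * b) ^ u)⁻¹ * b * (a * b) ^ u * (a * b) := by rw [← mul_assoc]

end helper2

theorem dv_period (i j : B) (n : ℕ) : dv cs i j (n + Cm i j) = dv cs i j n := by
  have haa := cs.simple_mul_simple_self i
  have hbb := cs.simple_mul_simple_self j
  have hm : (s i * s j) ^ (Cm i j) = 1 := cs.simple_mul_simple_pow i j
  rcases Nat.even_or_odd (Cm i j) with hme | hmo
  · obtain ⟨r, hr⟩ := hme
    have hr' : Cm i j = 2 * r := by omega
    rcases Nat.even_or_odd n with hne | hno
    · obtain ⟨u, hu⟩ := hne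
      rw [show n + Cm i j = 2 * (u + r) by omega, show n = 2 * u by omega,
        dv_two_mul, dv_two_mul]
      exact braid_shift_even haa hbb hm hr' u
    · obtain ⟨u, hu⟩ := hno
      rw [show n + Cm i j = 2 * (u + r) + 1 by omega, show n = 2 * u + 1 by omega,
        dv_two_mul_add_one, dv_two_mul_add_one]
      rw [braid_shift_even haa hbb hm hr' u]
  · obtain ⟨r, hr⟩ := hmo
    rcases Nat.even_or_odd n with hne | hno
    · obtain ⟨u, hu⟩ := hne
      rw [show n + Cm i j = 2 * (u + r) + 1 by omega, show n = 2 * u by omega,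
        dv_two_mul_add_one, dv_two_mul]
      exact braid_shift_odd1 haa hbb hm hr u
    · obtain ⟨u, hu⟩ := hno
      rw [show n + Cm i j = 2 * (u + r + 1) by omega, show n = 2 * u + 1 by omega,
        dv_two_mul, dv_two_mul_add_one]
      exact braid_shift_odd2 haa hbb hm hr u

theorem ris_alternatingWord_double (i j : B) :
    ris (alternatingWord i j (2 * Cm i j)) =
      ris (alternatingWord i j (Cm i j)) ++ ris (alternatingWord i j (Cm i j)) := by
  set m := Cm i j with hm
  apply List.ext_getElem
  · simp [length_alternatingWord]
    omega
  · intro k h1 h2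
    have hk : k < 2 * m := by simpa [length_alternatingWord] using h1
    have hlen : (ris (alternatingWord i j m)).length = m := by
      simp [length_alternatingWord]
    rw [← List.getD_eq_getElem _ 1, ← List.getD_eq_getElem _ 1]
    rw [getD_ris_alternatingWord cs i j _ k hk]
    by_cases hkm : k < m
    · rw [List.getD_eq_getElem _ 1 (by rw [List.length_append]; omega),
        List.getElem_append_left (by omega), ← List.getD_eq_getElem _ 1,
        getD_ris_alternatingWord cs i j m k hkm]
      rw [show 2 * m - k - 1 = (m - k - 1) + m by omega]
      exact dv_period cs i j (m - k - 1)
    · rw [List.getD_eq_getElem _ 1 (by rw [List.length_append]; omega),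
        List.getElem_append_right (by omega), ← List.getD_eq_getElem _ 1]
      have hkm2 : k - (ris (alternatingWord i j m)).length < m := by omega
      rw [getD_ris_alternatingWord cs i j m _ hkm2]
      congr 1
      simp only [hlen]
      omega

theorem prod_map_alternatingWord_two_mul {G : Type*} [Monoid G] (f : B → G) (i j : B)
    (m : ℕ) : ((alternatingWord i j (2 * m)).map f).prod = (f i * f j) ^ m := by
  induction m with
  | zero => simp [alternatingWord]
  | succ m ih =>
    have e1 : 2 * (m + 1) = (2 * m + 1) + 1 := by omega
    rw [e1, alternatingWord_succ', alternatingWord_succ',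
      if_neg (by rw [Nat.even_iff]; omega : ¬ Even (2 * m + 1)),
      if_pos (by rw [Nat.even_iff]; omega : Even (2 * m))]
    rw [List.map_cons, List.map_cons, List.prod_cons, List.prod_cons, ih]
    rw [pow_succ']
    rw [mul_assoc]

theorem eta_liftable : Cm.IsLiftable (eta cs) := by
  intro i j
  have h1 : (eta cs i * eta cs j) ^ (Cm i j) = etaWord cs (alternatingWord i j (2 * Cm i j)) := by
    rw [etaWord, prod_map_alternatingWord_two_mul]
  rw [h1]
  apply Equiv.ext
  rintro ⟨t, ε⟩
  rw [etaWord_apply]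
  have hπ : π (alternatingWord i j (2 * Cm i j)) = 1 := by
    rw [cs.prod_alternatingWord_eq_mul_pow,
      if_pos (by rw [Nat.even_iff]; omega : Even (2 * Cm i j)),
      show 2 * Cm i j / 2 = Cm i j by omega, one_mul]
    exact cs.simple_mul_simple_pow i j
  have hcount : ¬ Odd ((ris (alternatingWord i j (2 * Cm i j))).count t) := by
    rw [ris_alternatingWord_double, List.count_append]
    simp [Nat.odd_iff]
    omega
  rw [hπ, if_neg hcount, Equiv.Perm.one_apply]
  simp

/-- The sign representation on `W × ℤˣ`. -/
def phi : W →* Equiv.Perm (W × ℤˣ) := cs.lift ⟨eta cs, eta_liftable cs⟩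

theorem phi_simple (i : B) : phi cs (s i) = eta cs i :=
  cs.lift_apply_simple (eta_liftable cs) i

theorem phi_wordProd (ω : List B) : phi cs (π ω) = etaWord cs ω := by
  rw [wordProd, etaWord, map_list_prod, List.map_map]
  congr 1
  apply List.map_congr_left
  intro i _
  exact phi_simple cs i

theorem phi_apply_word (ω : List B) (t : W) (ε : ℤˣ) :
    phi cs (π ω) (t, ε) =
      (π ω * t * (π ω)⁻¹, if Odd ((ris ω).count t) then -ε else ε) := by
  rw [phi_wordProd, etaWord_apply]

theorem phi_apply' (w t : W) (ε : ℤˣ) :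
    phi cs w (t, ε) = (w * t * w⁻¹, ε * (phi cs w (t, 1)).2) := by
  obtain ⟨ω, rfl⟩ := cs.wordProd_surjective w
  rw [phi_apply_word, phi_apply_word]
  by_cases h : Odd ((ris ω).count t)
  · rw [if_pos h, if_pos h]
    simp
  · rw [if_neg h, if_neg h]
    simp

theorem phi_reflection_sign {t : W} (ht : cs.IsReflection t) : (phi cs t (t, 1)).2 = -1 := by
  obtain ⟨u, k, rfl⟩ := ht
  set δ := (phi cs u⁻¹ (u * s k * u⁻¹, 1)).2 with hδ
  set γ := (phi cs u (s k, 1)).2 with hγ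
  have h1 : phi cs u⁻¹ (u * s k * u⁻¹, 1) = (s k, δ) := by
    rw [phi_apply', one_mul, ← hδ]
    congr 1
    group
  have h2 : phi cs u (s k, δ) = (u * s k * u⁻¹, δ * γ) := by
    rw [phi_apply', ← hγ]
  have h3 : δ * γ = 1 := by
    have h4 : phi cs u (phi cs u⁻¹ (u * s k * u⁻¹, 1)) = (u * s k * u⁻¹, 1) := by
      rw [← Equiv.Perm.mul_apply, ← map_mul, mul_inv_cancel, map_one, Equiv.Perm.one_apply]
    rw [h1, h2] at h4
    exact congrArg Prod.snd h4
  have h5 : phi cs (u * s k * u⁻¹) = phi cs u * eta cs k * phi cs u⁻¹ := by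
    rw [map_mul, map_mul, phi_simple, map_inv]
  have h6 : eta cs k (s k, δ) = (s k, -δ) := by
    rw [eta_apply, if_pos rfl, cs.simple_mul_simple_self k, one_mul]
  rw [h5, Equiv.Perm.mul_apply, Equiv.Perm.mul_apply, h1, h6, phi_apply', ← hγ]
  show -δ * γ = -1
  rw [neg_mul, h3]

theorem phi_sign_neg_iff {t : W} (ht : cs.IsReflection t) (w : W) :
    (phi cs w (t, 1)).2 = -1 ↔ ℓ (w * t) < ℓ w := by
  have fwd : ∀ v : W, (phi cs v (t, 1)).2 = -1 → ℓ (v * t) < ℓ v := by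
    intro v hv
    obtain ⟨ω, hω, rfl⟩ := cs.exists_reduced_word' v
    rw [phi_apply_word] at hv
    have hodd : Odd ((ris ω).count t) := by
      by_contra hodd
      rw [if_neg hodd] at hv
      have h1 : (1 : ℤˣ) = -1 := hv
      exact absurd h1 (by decide)
    have hmem : t ∈ ris ω := by
      rw [← List.count_pos_iff]
      rcases hodd with ⟨c, hc⟩
      omega
    exact (cs.isRightInversion_of_mem_rightInvSeq hω hmem).2
  constructor
  · exact fwd w
  · intro h
    have hts : t * t = 1 := ht.mul_self
    have hw : w = (w * t) * t := by rw [mul_assoc, hts, mul_one]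
    have h7 : phi cs w (t, 1) = phi cs (w * t) (phi cs t (t, 1)) := by
      rw [← Equiv.Perm.mul_apply, ← map_mul, mul_assoc, hts, mul_one]
    have h8 : phi cs t (t, 1) = (t, -1) := by
      rw [phi_apply', one_mul, phi_reflection_sign cs ht]
      congr 1
      rw [ht.inv, hts, one_mul]
    have h9 : (phi cs (w * t) (t, 1)).2 = 1 := by
      rcases Int.units_eq_one_or (phi cs (w * t) (t, 1)).2 with h | h
      · exact h
      · exfalso
        have := fwd (w * t) h
        rw [mul_assoc, hts, mul_one] at this
        omega
    rw [h7, h8, phi_apply' cs (w * t) t (-1), h9]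
    show -1 * 1 = -1
    rw [mul_one]

theorem strongExchange (ω : List B) {t : W} (ht : cs.IsReflection t)
    (hl : ℓ (π ω * t) < ℓ (π ω)) :
    ∃ j, j < ω.length ∧ π (ω.eraseIdx j) = π ω * t := by
  have hsign : (phi cs (π ω) (t, 1)).2 = -1 := (phi_sign_neg_iff cs ht (π ω)).mpr hl
  rw [phi_apply_word] at hsign
  have hodd : Odd ((ris ω).count t) := by
    by_contra hodd
    rw [if_neg hodd] at hsign
    have h1 : (1 : ℤˣ) = -1 := hsign
    exact absurd h1 (by decide)
  have hmem : t ∈ ris ω := by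
    rw [← List.count_pos_iff]
    rcases hodd with ⟨c, hc⟩
    omega
  rw [List.mem_iff_getElem] at hmem
  obtain ⟨j, hj, hget⟩ := hmem
  have hj' : j < ω.length := by simpa using hj
  refine ⟨j, hj', ?_⟩
  have := cs.wordProd_mul_getD_rightInvSeq ω j
  rw [List.getD_eq_getElem _ 1 hj, hget] at this
  exact this.symm

end


end auxiliary

/-- Bruhat order on the Coxeter group `W`: the reflexive-transitive closure of the
relation "multiply on the right by a reflection, increasing the length". -/
def bruhatLE : W → W → Prop :=
  Relation.ReflTransGen (fun u v => (∃ t, cs.IsReflection t ∧ v = u * t) ∧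
    cs.length u < cs.length v)

/-- The covering relation of Bruhat order: `u ⋖ v` iff `u⁻¹v` is a reflection and
`ℓ(v) = ℓ(u) + 1`. -/
def bruhatCovBy (u v : W) : Prop :=
  cs.IsReflection (u⁻¹ * v) ∧ cs.length v = cs.length u + 1

/-- The standard parabolic subgroup `W_J` generated by the simple reflections
indexed by `J`. -/
def parabolic (J : Set B) : Subgroup W := Subgroup.closure (cs.simple '' J)

/-- `w` belongs to the set `W^J` of minimal length coset representatives of `W/W_J`. -/
def isMinimalRight (J : Set B) (w : W) : Prop := ∀ j ∈ J, ¬ cs.IsRightDescent w j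

/-- `w` belongs to the set `^J W` of minimal length coset representatives of `W_J\W`. -/
def isMinimalLeft (J : Set B) (w : W) : Prop := ∀ j ∈ J, ¬ cs.IsLeftDescent w j


section bruhat

open List

local prefix:100 "s" => cs.simple
local prefix:100 "π" => cs.wordProd
local prefix:100 "ℓ" => cs.length
local prefix:100 "ris" => cs.rightInvSeq

section bruhat

theorem bruhatLE_refl (w : W) : bruhatLE cs w w := Relation.ReflTransGen.refl

theorem bruhatLE_trans {u v w : W} (h1 : bruhatLE cs u v) (h2 : bruhatLE cs v w) :
    bruhatLE cs u w := Relation.ReflTransGen.trans h1 h2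

theorem le_mul_reflection {u t : W} (ht : cs.IsReflection t) (h : ℓ u < ℓ (u * t)) :
    bruhatLE cs u (u * t) :=
  Relation.ReflTransGen.single ⟨⟨t, ht, rfl⟩, h⟩

theorem mul_reflection_le {u t : W} (ht : cs.IsReflection t) (h : ℓ (u * t) < ℓ u) :
    bruhatLE cs (u * t) u :=
  Relation.ReflTransGen.single ⟨⟨t, ht, by rw [mul_assoc, ht.mul_self, mul_one]⟩, h⟩

theorem length_le_of_bruhatLE {u w : W} (h : bruhatLE cs u w) : ℓ u ≤ ℓ w := by
  induction h with
  | refl => exact le_rfl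
  | tail _ hstep ih => exact ih.trans hstep.2.le

theorem smul_reflection (k : B) (y : W) : s k * y = y * (y⁻¹ * s k * y) := by group

theorem isReflection_conj_simple (k : B) (y : W) : cs.IsReflection (y⁻¹ * s k * y) := by
  have := (cs.isReflection_simple k).conj y⁻¹
  simpa using this

theorem le_simple_smul {k : B} {y : W} (h : ℓ y < ℓ (s k * y)) : bruhatLE cs y (s k * y) := by
  rw [smul_reflection cs k y] at h ⊢
  exact le_mul_reflection cs (isReflection_conj_simple cs k y) h

theorem simple_smul_le {k : B} {y : W} (h : ℓ (s k * y) < ℓ y) : bruhatLE cs (s k * y) y := by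
  rw [smul_reflection cs k y] at h ⊢
  exact mul_reflection_le cs (isReflection_conj_simple cs k y) h

/-- The right diamond lemma. -/
theorem right_diamond {u v : W} {i : B} {t : W} (ht : cs.IsReflection t) (hv : v = u * t)
    (hlv : ℓ v = ℓ u + 1) (hui : ℓ (u * s i) = ℓ u + 1) (hvd : ℓ (v * s i) < ℓ v) :
    v = u * s i := by
  obtain ⟨σ, hσred, hσ⟩ := cs.exists_reduced_word' u
  have hσlen : σ.length = ℓ u := by rw [hσ]; exact hσred.symm
  have hπ : π (σ ++ [i]) = u * s i := by
    rw [cs.wordProd_append, cs.wordProd_singleton, ← hσ]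
  have ht2 : cs.IsReflection (s i * t * s i) := by
    have := ht.conj (s i)
    rwa [cs.inv_simple] at this
  have hkey : u * s i * (s i * t * s i) = v * s i := by
    rw [hv]
    have e : u * s i * (s i * t * s i) = u * (s i * s i) * (t * s i) := by group
    rw [e, cs.simple_mul_simple_self, mul_one, ← mul_assoc]
  have hlen : ℓ (π (σ ++ [i]) * (s i * t * s i)) < ℓ (π (σ ++ [i])) := by
    rw [hπ, hkey, hui]
    omega
  obtain ⟨j, hj, hej⟩ := strongExchange cs (σ ++ [i]) ht2 hlen
  rw [hπ, hkey] at hej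
  by_cases hjl : j < σ.length
  · exfalso
    rw [List.eraseIdx_append_of_lt_length hjl] at hej
    have h1 : v = π (σ.eraseIdx j) := by
      have h2 : π (σ.eraseIdx j ++ [i]) * s i = v * s i * s i := by rw [hej]
      rw [cs.wordProd_append, cs.wordProd_singleton, mul_assoc, cs.simple_mul_simple_self,
        mul_assoc, cs.simple_mul_simple_self, mul_one, mul_one] at h2
      exact h2.symm
    have h3 : ℓ v ≤ (σ.eraseIdx j).length := h1 ▸ cs.length_wordProd_le _
    rw [List.length_eraseIdx_of_lt hjl] at h3
    omega
  · have hj2 : j = σ.length := by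
      have : (σ ++ [i]).length = σ.length + 1 := by simp
      omega
    rw [List.eraseIdx_append_of_length_le (by omega), hj2, Nat.sub_self] at hej
    have he : [i].eraseIdx 0 = ([] : List B) := rfl
    rw [he, List.append_nil, ← hσ] at hej
    rw [hej, mul_assoc, cs.simple_mul_simple_self, mul_one]

/-- The left diamond lemma. -/
theorem left_diamond {v v₁ : W} {k : B} {t : W} (ht : cs.IsReflection t) (h1 : v₁ = v * t)
    (h2 : ℓ v₁ = ℓ v + 1) (h3 : ℓ (s k * v) = ℓ v + 1) (h4 : ℓ (s k * v₁) < ℓ v₁) :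
    s k * v = v₁ := by
  have ht' : cs.IsReflection (v * t * v⁻¹) := ht.conj v
  have hv' : v₁⁻¹ = v⁻¹ * (v * t * v⁻¹) := by rw [h1, mul_inv_rev, ht.inv]; group
  have hl1 : ℓ v₁⁻¹ = ℓ v⁻¹ + 1 := by rw [cs.length_inv, cs.length_inv]; exact h2
  have hl2 : ℓ (v⁻¹ * s k) = ℓ v⁻¹ + 1 := by
    have e : v⁻¹ * s k = (s k * v)⁻¹ := by rw [mul_inv_rev, cs.inv_simple]
    rw [e, cs.length_inv, cs.length_inv]
    exact h3
  have hl3 : ℓ (v₁⁻¹ * s k) < ℓ v₁⁻¹ := by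
    have e : v₁⁻¹ * s k = (s k * v₁)⁻¹ := by rw [mul_inv_rev, cs.inv_simple]
    rw [e, cs.length_inv, cs.length_inv]
    exact h4
  have := right_diamond cs ht' hv' hl1 hl2 hl3
  have h5 : v₁ = (v⁻¹ * s k)⁻¹ := by rw [← this, inv_inv]
  rw [h5, mul_inv_rev, inv_inv, cs.inv_simple]

/-- Left multiplication by a simple reflection is monotone towards an ascent. -/
theorem simple_smul_mono {k : B} {y : W} (hy : ℓ y < ℓ (s k * y)) :
    ∀ {v : W}, bruhatLE cs v y → bruhatLE cs (s k * v) (s k * y) := by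
  intro v h
  induction h using Relation.ReflTransGen.head_induction_on with
  | refl => exact bruhatLE_refl cs _
  | @head v v₁ hstep hrest ih =>
    obtain ⟨⟨t, ht, hv₁⟩, hlt⟩ := hstep
    have hvy : bruhatLE cs v y := Relation.ReflTransGen.head ⟨⟨t, ht, hv₁⟩, hlt⟩ hrest
    rcases cs.length_simple_mul v k with hvasc | hvdesc
    · -- ℓ (s k * v) = ℓ v + 1
      rcases cs.length_simple_mul v₁ k with h₁asc | h₁desc
      · -- both ascents: single step
        refine bruhatLE_trans cs (Relation.ReflTransGen.single ?_) ih
        refine ⟨⟨t, ht, by rw [hv₁, mul_assoc]⟩, ?_⟩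
        rw [hvasc, h₁asc]
        omega
      · -- v₁ is a descent for k
        have hne : ℓ (s k * v₁) ≠ ℓ (s k * v) := by
          have e : s k * v₁ = (s k * v) * t := by rw [hv₁, mul_assoc]
          rw [e]
          exact ht.length_mul_left_ne (s k * v)
        rcases lt_or_gt_of_ne hne with hlt2 | hlt2
        · -- ℓ (s k * v₁) < ℓ (s k * v) : tight case, diamond
          have htight : ℓ v₁ = ℓ v + 1 := by omega
          have := left_diamond cs ht hv₁ htight hvasc (by omega)
          rw [this]
          exact bruhatLE_trans cs hrest (le_simple_smul cs hy)
        · -- step up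
          refine bruhatLE_trans cs (Relation.ReflTransGen.single ?_) ih
          exact ⟨⟨t, ht, by rw [hv₁, mul_assoc]⟩, hlt2⟩
    · -- ℓ (s k * v) < ℓ v : go down then up
      have h6 : bruhatLE cs (s k * v) v := simple_smul_le cs (by omega)
      exact bruhatLE_trans cs h6 (bruhatLE_trans cs hvy (le_simple_smul cs hy))

/-- Subword property, easy direction: a subword of a reduced word is Bruhat-below it. -/
theorem sublist_le {α : List B} (hred : cs.IsReduced α) :
    ∀ {β : List B}, β <+ α → bruhatLE cs (π β) (π α) := by
  induction α with
  | nil =>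
    intro β hs
    rw [List.sublist_nil.mp hs]
    exact bruhatLE_refl cs _
  | cons k α ih =>
    intro β hs
    have hredα : cs.IsReduced α := by
      have := hred.drop 1
      simpa using this
    have hasc : ℓ (π α) < ℓ (s k * π α) := by
      rw [← cs.wordProd_cons]
      have h1 : ℓ (π α) = α.length := hredα
      have h2 : ℓ (π (k :: α)) = α.length + 1 := by
        rw [hred]
        simp
      omega
    rcases List.sublist_cons_iff.mp hs with h | ⟨β', rfl, hβ'⟩
    · exact bruhatLE_trans cs (ih hredα h) (by rw [cs.wordProd_cons]; exact le_simple_smul cs hasc)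
    · rw [cs.wordProd_cons, cs.wordProd_cons]
      exact simple_smul_mono cs hasc (ih hredα hβ')

/-- Subword property, hard direction: anything Bruhat-below `w` is a subword of any word
for `w`. -/
theorem le_exists_sublist {u w : W} (h : bruhatLE cs u w) :
    ∀ ω : List B, π ω = w → ∃ β, β <+ ω ∧ π β = u := by
  induction h using Relation.ReflTransGen.head_induction_on with
  | refl => exact fun ω hω => ⟨ω, List.Sublist.refl ω, hω⟩
  | @head a c hstep hrest ih =>
    obtain ⟨⟨t, ht, hc⟩, hlt⟩ := hstep
    intro ω hω
    obtain ⟨β₁, hβ₁s, hβ₁⟩ := ih ω hω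
    have hlen : ℓ (π β₁ * t) < ℓ (π β₁) := by
      rw [hβ₁, hc, mul_assoc, ht.mul_self, mul_one, ← hc]
      exact hlt
    obtain ⟨j, hj, hej⟩ := strongExchange cs β₁ ht hlen
    refine ⟨β₁.eraseIdx j, (List.eraseIdx_sublist β₁ j).trans hβ₁s, ?_⟩
    rw [hej, hβ₁, hc, mul_assoc, ht.mul_self, mul_one]

theorem concat_sublist_cases {β α : List B} {i : B} (h : β <+ α ++ [i]) :
    β <+ α ∨ ∃ β₀, β₀ <+ α ∧ β = β₀ ++ [i] := by
  have h1 : β.reverse <+ i :: α.reverse := by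
    have := h.reverse
    simpa using this
  rcases List.sublist_cons_iff.mp h1 with h2 | ⟨r, hr, h2⟩
  · left
    have := h2.reverse
    simpa using this
  · right
    refine ⟨r.reverse, by simpa using h2.reverse, ?_⟩
    have h3 : β.reverse.reverse = (i :: r).reverse := by rw [hr]
    simpa using h3

theorem exists_reduced_word_concat {w : W} {i : B} (h : ℓ (w * s i) < ℓ w) :
    ∃ σ : List B, cs.IsReduced (σ ++ [i]) ∧ π (σ ++ [i]) = w ∧ π σ = w * s i ∧
      cs.IsReduced σ := by
  obtain ⟨σ, hσred, hσ⟩ := cs.exists_reduced_word' (w * s i)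
  have hπ : π (σ ++ [i]) = w := by
    rw [cs.wordProd_append, cs.wordProd_singleton, ← hσ, mul_assoc,
      cs.simple_mul_simple_self, mul_one]
  have hlm : ℓ (w * s i) + 1 = ℓ w := by
    rcases cs.length_mul_simple w i with h1 | h1
    · omega
    · exact h1
  have hσlen : σ.length = ℓ (w * s i) := by rw [hσ]; exact hσred.symm
  have hred : cs.IsReduced (σ ++ [i]) := by
    show ℓ (π (σ ++ [i])) = (σ ++ [i]).length
    rw [hπ]
    simp only [List.length_append, List.length_singleton]
    omega
  exact ⟨σ, hred, hπ, hσ.symm, hσred⟩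

/-- The lifting property (Deodhar's Property Z). -/
theorem bruhat_lift {w u : W} {i : B} (hw : ℓ (w * s i) < ℓ w) (h : bruhatLE cs u w) :
    bruhatLE cs (u * s i) w := by
  rcases cs.length_mul_simple u i with huasc | hudesc
  · -- ascent at u
    obtain ⟨σ, hred, hπ, hσ, hredσ⟩ := exists_reduced_word_concat cs hw
    obtain ⟨β, hβs, hβ⟩ := le_exists_sublist cs h (σ ++ [i]) hπ
    rcases concat_sublist_cases hβs with hcase | ⟨β₀, hβ₀, rfl⟩
    · have h2 : π (β ++ [i]) = u * s i := by
        rw [cs.wordProd_append, cs.wordProd_singleton, hβ]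
      have h3 := sublist_le cs hred (hcase.append (List.Sublist.refl [i]))
      rw [h2, hπ] at h3
      exact h3
    · have h2 : π β₀ = u * s i := by
        have h4 : π (β₀ ++ [i]) = u := hβ
        rw [cs.wordProd_append, cs.wordProd_singleton] at h4
        rw [← h4, mul_assoc, cs.simple_mul_simple_self, mul_one]
      have h3 := sublist_le cs hredσ hβ₀
      rw [h2, hσ] at h3
      exact bruhatLE_trans cs h3 (mul_reflection_le cs (cs.isReflection_simple i) hw)
  · -- descent at u
    exact bruhatLE_trans cs
      (mul_reflection_le cs (cs.isReflection_simple i) (by omega)) h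

theorem bruhat_lift_down {v u : W} {i : B} (hv : ℓ (v * s i) < ℓ v)
    (hu : ℓ (u * s i) < ℓ u) (h : bruhatLE cs u v) :
    bruhatLE cs (u * s i) (v * s i) := by
  obtain ⟨σ, hred, hπ, hσ, hredσ⟩ := exists_reduced_word_concat cs hv
  obtain ⟨β, hβs, hβ⟩ := le_exists_sublist cs h (σ ++ [i]) hπ
  rcases concat_sublist_cases hβs with hcase | ⟨β₀, hβ₀, rfl⟩
  · have h1 : bruhatLE cs u (v * s i) := by
      have := sublist_le cs hredσ hcase
      rwa [hβ, hσ] at this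
    exact bruhatLE_trans cs (mul_reflection_le cs (cs.isReflection_simple i) hu) h1
  · have h2 : π β₀ = u * s i := by
      have h4 : π (β₀ ++ [i]) = u := hβ
      rw [cs.wordProd_append, cs.wordProd_singleton] at h4
      rw [← h4, mul_assoc, cs.simple_mul_simple_self, mul_one]
    have h3 := sublist_le cs hredσ hβ₀
    rwa [h2, hσ] at h3

end bruhat


/-- If `s` is a right descent of `w`, then `ρ_s : u ↦ us` is a special matching of the
lower Bruhat interval `[e,w]`: it maps the interval to itself, each `{u, us}` is a
covering pair (a Hasse diagram edge), and `u ⋖ v`, `ρ_s u ≠ v` imply `ρ_s u ≤ ρ_s v`.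
(It is clearly an involution.) -/
theorem rho_is_special_matching (w : W) (i : B) (hi : cs.IsRightDescent w i) :
    (∀ u : W, bruhatLE cs u w → bruhatLE cs (u * cs.simple i) w) ∧
    (∀ u : W, bruhatLE cs u w →
      bruhatCovBy cs (u * cs.simple i) u ∨ bruhatCovBy cs u (u * cs.simple i)) ∧
    (∀ u v : W, bruhatLE cs u w → bruhatLE cs v w → bruhatCovBy cs u v →
      u * cs.simple i ≠ v → bruhatLE cs (u * cs.simple i) (v * cs.simple i)) := by
  have hwd : ℓ (w * s i) < ℓ w := hi
  refine ⟨?_, ?_, ?_⟩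
  · intro u hu
    exact bruhat_lift cs hwd hu
  · intro u _
    rcases cs.length_mul_simple u i with hasc | hdesc
    · right
      refine ⟨?_, hasc⟩
      rw [inv_mul_cancel_left]
      exact cs.isReflection_simple i
    · left
      refine ⟨?_, by omega⟩
      rw [mul_inv_rev, cs.inv_simple, mul_assoc, inv_mul_cancel, mul_one]
      exact cs.isReflection_simple i
  · intro u v _ _ hcov hne
    obtain ⟨hrefl, hlen⟩ := hcov
    have hveq : v = u * (u⁻¹ * v) := by rw [mul_inv_cancel_left]
    have huv : bruhatLE cs u v :=
      Relation.ReflTransGen.single ⟨⟨u⁻¹ * v, hrefl, hveq⟩, by omega⟩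
    rcases cs.length_mul_simple u i with huasc | hudesc
    · rcases cs.length_mul_simple v i with hvasc | hvdesc
      · -- both ascents
        have hvv : v * s i * s i = v := by
          rw [mul_assoc, cs.simple_mul_simple_self, mul_one]
        have hdesc' : ℓ (v * s i * s i) < ℓ (v * s i) := by rw [hvv]; omega
        have h1 : bruhatLE cs u (v * s i) :=
          bruhatLE_trans cs huv
            (le_mul_reflection cs (cs.isReflection_simple i) (by omega))
        exact bruhat_lift cs hdesc' h1
      · -- u ascent, v descent: diamond forces u * s i = v
        exfalso
        exact hne (right_diamond cs hrefl hveq hlen huasc (by omega)).symm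
    · rcases cs.length_mul_simple v i with hvasc | hvdesc
      · -- u descent, v ascent
        have h1 : bruhatLE cs (u * s i) u :=
          mul_reflection_le cs (cs.isReflection_simple i) (by omega)
        have h2 : bruhatLE cs v (v * s i) :=
          le_mul_reflection cs (cs.isReflection_simple i) (by omega)
        exact bruhatLE_trans cs h1 (bruhatLE_trans cs huv h2)
      · -- both descents
        exact bruhat_lift_down cs (by omega) (by omega) huv
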